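/- Norm comparison under weighted mean-zero constraint: let u, M : {1,…,N} → ℝ with M positive, Σ_q M_q Δv = 1, Σ_q u_q M_q Δv = 0, and suppose Σ_q M_q² Δv ≤ L·M_max where L = N·Δv and M_max = max_q M_q. Then the discrete L² norms satisfy ‖u‖² ≤ (1 + sqrt(L·M_max))² · ‖u − ū‖², where ū is the arithmetic mean of u and ‖φ‖² = Σ_q φ_q² Δv. -/

import Mathlib

/-- norm comparison under a weighted mean-zero constraint. -/
theorem norm_comparison_weighted_mean_zero
    (N : ℕ) (hN : 1 ≤ N) (Δv : ℝ) (hΔv : 0 < Δv)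
    (L : ℝ) (hL : L = N * Δv)
    (u M : ℕ → ℝ) (hM : ∀ q, 0 < M q)
    (hMnorm : ∑ q ∈ Finset.Icc 1 N, M q * Δv = 1)
    (horth : ∑ q ∈ Finset.Icc 1 N, u q * M q * Δv = 0)
    (Mmax : ℝ)
    (hMmax : Mmax = (Finset.Icc 1 N).sup' (by simp [Finset.nonempty_Icc]; omega) M)
    (hM2 : ∑ q ∈ Finset.Icc 1 N, (M q)^2 * Δv ≤ L * Mmax)
    (ubar : ℝ) (hubar : ubar = (1 / (N : ℝ)) * ∑ q ∈ Finset.Icc 1 N, u q) :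
    ∑ q ∈ Finset.Icc 1 N, (u q)^2 * Δv
      ≤ (1 + Real.sqrt (L * Mmax))^2 *
          ∑ q ∈ Finset.Icc 1 N, (u q - ubar)^2 * Δv := by
  set S := Finset.Icc 1 N with hS
  have hne : S.Nonempty := by
    rw [hS, Finset.nonempty_Icc]; omega
  have hcard : S.card = N := by rw [hS, Nat.card_Icc]; omega
  have hNpos : (0:ℝ) < N := by exact_mod_cast Nat.lt_of_lt_of_le Nat.zero_lt_one hN
  -- mean of w is zero
  have hwsum : ∑ q ∈ S, (u q - ubar) = 0 := by
    rw [Finset.sum_sub_distrib, Finset.sum_const, hcard, hubar, nsmul_eq_mul]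
    rw [← mul_assoc, mul_one_div_cancel hNpos.ne', one_mul, sub_self]
  -- M q ≤ Mmax
  have hle : ∀ q ∈ S, M q ≤ Mmax := by
    intro q hq
    rw [hMmax]
    exact Finset.le_sup' M hq
  have hMmaxpos : 0 < Mmax := lt_of_lt_of_le (hM 1) (hle 1 (by
    rw [hS]; simp; omega))
  -- ∑ M² Δv ≤ Mmax
  have hMsq : ∑ q ∈ S, (M q)^2 * Δv ≤ Mmax := by
    calc ∑ q ∈ S, (M q)^2 * Δv ≤ ∑ q ∈ S, Mmax * (M q * Δv) := by
          apply Finset.sum_le_sum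
          intro q hq
          have h1 := hle q hq
          have h2 := (hM q).le
          nlinarith [mul_nonneg (mul_nonneg (sub_nonneg.mpr h1) h2) hΔv.le]
      _ = Mmax * ∑ q ∈ S, M q * Δv := by rw [Finset.mul_sum]
      _ = Mmax := by rw [hMnorm, mul_one]
  -- ubar = - ∑ w M Δv
  have hubar_eq : ubar = -∑ q ∈ S, (u q - ubar) * M q * Δv := by
    have : ∑ q ∈ S, (u q - ubar) * M q * Δv
        = ∑ q ∈ S, u q * M q * Δv - ubar * ∑ q ∈ S, M q * Δv := by
      rw [Finset.mul_sum, ← Finset.sum_sub_distrib]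
      apply Finset.sum_congr rfl
      intro q hq; ring
    rw [this, horth, hMnorm]; ring
  -- Cauchy-Schwarz
  set W := ∑ q ∈ S, (u q - ubar)^2 * Δv with hW
  have hWnonneg : 0 ≤ W := Finset.sum_nonneg fun q _ => by positivity
  have hCS : (∑ q ∈ S, (u q - ubar) * M q * Δv)^2
      ≤ W * ∑ q ∈ S, (M q)^2 * Δv := by
    have hsq : Real.sqrt Δv * Real.sqrt Δv = Δv := Real.mul_self_sqrt hΔv.le
    have e1 : ∑ q ∈ S, ((u q - ubar) * Real.sqrt Δv) * (M q * Real.sqrt Δv)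
        = ∑ q ∈ S, (u q - ubar) * M q * Δv := by
      apply Finset.sum_congr rfl; intro q hq
      have : (u q - ubar) * Real.sqrt Δv * (M q * Real.sqrt Δv)
          = (u q - ubar) * M q * (Real.sqrt Δv * Real.sqrt Δv) := by ring
      rw [this, hsq]
    have e2 : ∑ q ∈ S, ((u q - ubar) * Real.sqrt Δv)^2 = W := by
      apply Finset.sum_congr rfl; intro q hq
      have : ((u q - ubar) * Real.sqrt Δv)^2
          = (u q - ubar)^2 * (Real.sqrt Δv * Real.sqrt Δv) := by ring
      rw [this, hsq]
    have e3 : ∑ q ∈ S, (M q * Real.sqrt Δv)^2 = ∑ q ∈ S, (M q)^2 * Δv := by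
      apply Finset.sum_congr rfl; intro q hq
      have : (M q * Real.sqrt Δv)^2 = (M q)^2 * (Real.sqrt Δv * Real.sqrt Δv) := by ring
      rw [this, hsq]
    calc (∑ q ∈ S, (u q - ubar) * M q * Δv)^2
        = (∑ q ∈ S, ((u q - ubar) * Real.sqrt Δv) * (M q * Real.sqrt Δv))^2 := by
          rw [e1]
      _ ≤ (∑ q ∈ S, ((u q - ubar) * Real.sqrt Δv)^2) *
            (∑ q ∈ S, (M q * Real.sqrt Δv)^2) := by
          exact Finset.sum_mul_sq_le_sq_mul_sq S _ _
      _ = W * ∑ q ∈ S, (M q)^2 * Δv := by rw [e2, e3]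
  have hub2 : ubar^2 ≤ Mmax * W := by
    have h1 : (∑ q ∈ S, (u q - ubar) * M q * Δv)^2 ≤ W * Mmax := by
      calc (∑ q ∈ S, (u q - ubar) * M q * Δv)^2
          ≤ W * ∑ q ∈ S, (M q)^2 * Δv := hCS
        _ ≤ W * Mmax := by
            exact mul_le_mul_of_nonneg_left hMsq hWnonneg
    have key : ubar^2 = (∑ q ∈ S, (u q - ubar) * M q * Δv)^2 := by
      conv_lhs => rw [hubar_eq]
      rw [neg_sq]
    rw [key]
    linarith
  -- splitting ∑ u² Δv = W + ubar² L
  have hsplit : ∑ q ∈ S, (u q)^2 * Δv = W + ubar^2 * L := by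
    have : ∀ q, (u q)^2 * Δv
        = (u q - ubar)^2 * Δv + (2 * ubar * Δv) * (u q - ubar) + ubar^2 * Δv := by
      intro q; ring
    rw [Finset.sum_congr rfl (fun q _ => this q)]
    rw [Finset.sum_add_distrib, Finset.sum_add_distrib, ← Finset.mul_sum, hwsum,
      Finset.sum_const, hcard, hL, hW]
    ring
  -- conclude
  have hLM : 0 ≤ L * Mmax := by
    have : 0 < L := by rw [hL]; positivity
    positivity
  have hs := Real.sq_sqrt hLM
  have hsnn := Real.sqrt_nonneg (L * Mmax)
  have hLpos : 0 < L := by rw [hL]; positivity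
  nlinarith [mul_le_mul_of_nonneg_left hub2 hLpos.le, hWnonneg, hLpos]
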